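/- arXiv:2212.01572 — 4 statements merged into one kernel-verified Lean document; each statement's English description precedes it below -/
import Mathlib

section
/- Let t ≥ 1, let f : ℝ^t → ℝ be Lipschitz with Lipschitz constant L₀, fix k ∈ {1, …, t}, and let g : ℝ^t → ℝ be a measurable function with |g| ≤ L₀ everywhere that coincides with the partial derivative ∂f/∂x_k at every point of ℝ^t where this partial derivative exists. For each n let v(n) ∈ ℝ^{n×t} with rows v_i(n), and let V be a random vector in ℝ^t with E‖V‖² < ∞ such that v(n) →_{W2} V. Assume the law of V is absolutely continuous with respect to Lebesgue measure on ℝ^t and that g is continuous at almost every point with respect to the law of V. Then for every pseudo-Lipschitz function φ : ℝ^{t+1} → ℝ of order 2, lim_{n→∞} (1/n) Σ_{i=1}^n φ(v_{i,1}(n), …, v_{i,t}(n), g(v_i(n))) = E[φ(V_1, …, V_t, g(V))]. -/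
open MeasureTheory ProbabilityTheory Filter

/-- A function `ψ : E → ℝ` is pseudo-Lipschitz of order 2 if there is a constant `L > 0`
with `|ψ u - ψ v| ≤ L ‖u - v‖ (1 + ‖u‖ + ‖v‖)` for all `u, v`. -/
def PseudoLipschitz {E : Type*} [NormedAddCommGroup E] (ψ : E → ℝ) : Prop :=
  ∃ L : ℝ, 0 < L ∧ ∀ u v : E, |ψ u - ψ v| ≤ L * ‖u - v‖ * (1 + ‖u‖ + ‖v‖)

/-- The joint empirical distribution of the rows of the arrays `v n` converges in
Wasserstein-2 distance to the law of the random vector `V`. -/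
def ConvW2 {k : ℕ} (v : ∀ n : ℕ, Fin n → EuclideanSpace ℝ (Fin k))
    {Ωs : Type*} [MeasureSpace Ωs] (V : Ωs → EuclideanSpace ℝ (Fin k)) : Prop :=
  ∀ ψ : EuclideanSpace ℝ (Fin k) → ℝ, PseudoLipschitz ψ →
    Tendsto (fun n : ℕ => (n : ℝ)⁻¹ * ∑ i : Fin n, ψ (v n i)) atTop
      (nhds (∫ ω, ψ (V ω)))

/-- Append a real coordinate at the end of a vector of `ℝ^t`. -/
noncomputable def snocE {t : ℕ} (x : EuclideanSpace ℝ (Fin t)) (r : ℝ) :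
    EuclideanSpace ℝ (Fin (t + 1)) :=
  (WithLp.equiv 2 (Fin (t + 1) → ℝ)).symm (Fin.snoc ((WithLp.equiv 2 (Fin t → ℝ)) x) r)

/-- Update the `k`-th coordinate of a vector of `ℝ^t`. -/
noncomputable def updE {t : ℕ} (x : EuclideanSpace ℝ (Fin t)) (k : Fin t) (s : ℝ) :
    EuclideanSpace ℝ (Fin t) :=
  (WithLp.equiv 2 (Fin t → ℝ)).symm (Function.update ((WithLp.equiv 2 (Fin t → ℝ)) x) k s)

/-! ### Auxiliary lemmas -/

section Snoc

variable {t : ℕ}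

lemma snocE_apply_castSucc (x : EuclideanSpace ℝ (Fin t)) (r : ℝ) (i : Fin t) :
    snocE x r i.castSucc = x i := by
  unfold snocE
  rw [WithLp.equiv_symm_apply]
  simp [Fin.snoc_castSucc]

lemma snocE_apply_last (x : EuclideanSpace ℝ (Fin t)) (r : ℝ) :
    snocE x r (Fin.last t) = r := by
  unfold snocE
  rw [WithLp.equiv_symm_apply]
  simp [Fin.snoc_last]

lemma snocE_sub (x y : EuclideanSpace ℝ (Fin t)) (a b : ℝ) :
    snocE x a - snocE y b = snocE (x - y) (a - b) := by
  ext i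
  induction i using Fin.lastCases with
  | last => simp [snocE_apply_last]
  | cast i => simp [snocE_apply_castSucc]

lemma norm_snocE_le (z : EuclideanSpace ℝ (Fin t)) (c : ℝ) :
    ‖snocE z c‖ ≤ ‖z‖ + |c| := by
  rw [EuclideanSpace.norm_eq]
  have h1 : ∑ i : Fin (t+1), ‖snocE z c i‖ ^ 2 = (∑ i : Fin t, ‖z i‖^2) + |c|^2 := by
    rw [Fin.sum_univ_castSucc]
    simp [snocE_apply_castSucc, snocE_apply_last, sq_abs]
  rw [h1]
  have h2 : ‖z‖ = √(∑ i : Fin t, ‖z i‖^2) := EuclideanSpace.norm_eq z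
  rw [h2]
  have hs : (0:ℝ) ≤ ∑ i : Fin t, ‖z i‖^2 := by positivity
  nlinarith [Real.sq_sqrt hs, Real.sqrt_nonneg (∑ i : Fin t, ‖z i‖^2), abs_nonneg c,
    Real.sqrt_nonneg ((∑ i : Fin t, ‖z i‖^2) + |c|^2),
    Real.sq_sqrt (by positivity : (0:ℝ) ≤ (∑ i : Fin t, ‖z i‖^2) + |c|^2)]

lemma norm_snocE_sub_le (x y : EuclideanSpace ℝ (Fin t)) (a b : ℝ) :
    ‖snocE x a - snocE y b‖ ≤ ‖x - y‖ + |a - b| :=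
  (snocE_sub x y a b) ▸ norm_snocE_le (x - y) (a - b)

lemma continuous_snocE :
    Continuous (fun p : EuclideanSpace ℝ (Fin t) × ℝ => snocE p.1 p.2) := by
  apply (LipschitzWith.of_dist_le_mul (K := 2)
    (f := fun p : EuclideanSpace ℝ (Fin t) × ℝ => snocE p.1 p.2) ?_).continuous
  rintro ⟨x, a⟩ ⟨y, b⟩
  rw [dist_eq_norm, Prod.dist_eq]
  calc ‖snocE x a - snocE y b‖ ≤ ‖x - y‖ + |a - b| := norm_snocE_sub_le x y a b
    _ = dist x y + dist a b := by rw [dist_eq_norm, Real.dist_eq]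
    _ ≤ max (dist x y) (dist a b) + max (dist x y) (dist a b) :=
        add_le_add (le_max_left _ _) (le_max_right _ _)
    _ = (2:NNReal) * max (dist x y) (dist a b) := by push_cast; ring

end Snoc

section Upd

variable {t : ℕ}

lemma updE_eq (x : EuclideanSpace ℝ (Fin t)) (k : Fin t) (s : ℝ) :
    updE x k s = x + (s - x k) • EuclideanSpace.single k (1:ℝ) := by
  unfold updE
  ext j
  rw [WithLp.equiv_symm_apply]
  rcases eq_or_ne j k with h | h
  · subst h
    simp [Function.update, EuclideanSpace.single_apply]
  · simp [Function.update, h, EuclideanSpace.single_apply]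

lemma norm_single_one {k : Fin t} : ‖EuclideanSpace.single k (1:ℝ)‖ = 1 := by
  rw [EuclideanSpace.norm_single]; simp

end Upd

/-- The difference quotient of `f` in direction `k` with increment `1/(j+1)`. -/
noncomputable def gseq {t : ℕ} (f : EuclideanSpace ℝ (Fin t) → ℝ) (k : Fin t) (j : ℕ)
    (x : EuclideanSpace ℝ (Fin t)) : ℝ :=
  ((j:ℝ)+1) * (f (x + ((j:ℝ)+1)⁻¹ • EuclideanSpace.single k (1:ℝ)) - f x)

section Gseq

variable {t : ℕ} {f : EuclideanSpace ℝ (Fin t) → ℝ} {L₀ : NNReal} {k : Fin t}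

lemma abs_gseq_le (hf : LipschitzWith L₀ f) (j : ℕ) (x : EuclideanSpace ℝ (Fin t)) :
    |gseq f k j x| ≤ L₀ := by
  have hd := hf.dist_le_mul (x + ((j:ℝ)+1)⁻¹ • EuclideanSpace.single k (1:ℝ)) x
  rw [Real.dist_eq, dist_eq_norm] at hd
  have hn : ‖x + ((j:ℝ)+1)⁻¹ • EuclideanSpace.single k (1:ℝ) - x‖ = ((j:ℝ)+1)⁻¹ := by
    have hx : x + ((j:ℝ)+1)⁻¹ • EuclideanSpace.single k (1:ℝ) - x
        = ((j:ℝ)+1)⁻¹ • EuclideanSpace.single k (1:ℝ) := by abel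
    rw [hx, norm_smul, norm_single_one, mul_one, Real.norm_eq_abs,
      abs_of_pos (by positivity)]
  rw [hn] at hd
  have hj : (0:ℝ) < (j:ℝ)+1 := by positivity
  rw [gseq, abs_mul, abs_of_pos hj]
  calc ((j:ℝ)+1) * |f (x + ((j:ℝ)+1)⁻¹ • EuclideanSpace.single k (1:ℝ)) - f x|
      ≤ ((j:ℝ)+1) * ((L₀:ℝ) * ((j:ℝ)+1)⁻¹) := by
        exact mul_le_mul_of_nonneg_left hd (le_of_lt hj)
    _ = L₀ := by field_simp

lemma lipschitz_gseq' (hf : LipschitzWith L₀ f) (j : ℕ) :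
    ∀ x y, |gseq f k j x - gseq f k j y| ≤ (((j:ℝ)+1) * (2*L₀)) * ‖x - y‖ := by
  intro x y
  have h1 := hf.dist_le_mul (x + ((j:ℝ)+1)⁻¹ • EuclideanSpace.single k (1:ℝ))
      (y + ((j:ℝ)+1)⁻¹ • EuclideanSpace.single k (1:ℝ))
  have h2 := hf.dist_le_mul x y
  rw [Real.dist_eq, dist_eq_norm] at h1 h2
  have he : x + ((j:ℝ)+1)⁻¹ • EuclideanSpace.single k (1:ℝ) -
      (y + ((j:ℝ)+1)⁻¹ • EuclideanSpace.single k (1:ℝ)) = x - y := by abel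
  rw [he] at h1
  have hj : (0:ℝ) ≤ (j:ℝ)+1 := by positivity
  have hr : gseq f k j x - gseq f k j y = ((j:ℝ)+1) *
      ((f (x + ((j:ℝ)+1)⁻¹ • EuclideanSpace.single k (1:ℝ)) -
        f (y + ((j:ℝ)+1)⁻¹ • EuclideanSpace.single k (1:ℝ))) - (f x - f y)) := by
    rw [gseq, gseq]; ring
  rw [hr, abs_mul, abs_of_nonneg hj]
  have habs : |(f (x + ((j:ℝ)+1)⁻¹ • EuclideanSpace.single k (1:ℝ)) -
        f (y + ((j:ℝ)+1)⁻¹ • EuclideanSpace.single k (1:ℝ))) - (f x - f y)| ≤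
      (L₀:ℝ) * ‖x - y‖ + (L₀:ℝ) * ‖x - y‖ := by
    calc _ ≤ |f (x + ((j:ℝ)+1)⁻¹ • EuclideanSpace.single k (1:ℝ)) -
        f (y + ((j:ℝ)+1)⁻¹ • EuclideanSpace.single k (1:ℝ))| + |f x - f y| := abs_sub _ _
    _ ≤ (L₀:ℝ) * ‖x - y‖ + (L₀:ℝ) * ‖x - y‖ := add_le_add h1 h2
  nlinarith [abs_nonneg (f x - f y)]

lemma continuous_gseq (hf : LipschitzWith L₀ f) (j : ℕ) : Continuous (gseq f k j) := by
  unfold gseq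
  exact continuous_const.mul
    (((hf.continuous.comp (continuous_id.add continuous_const))).sub hf.continuous)

lemma hasDerivAt_updE (x : EuclideanSpace ℝ (Fin t)) (k : Fin t)
    (hx : DifferentiableAt ℝ f x) :
    HasDerivAt (fun s : ℝ => f (updE x k s))
      (fderiv ℝ f x (EuclideanSpace.single k (1:ℝ))) (x k) := by
  have h1 : HasDerivAt (fun s : ℝ => x + (s - x k) • EuclideanSpace.single k (1:ℝ))
      (EuclideanSpace.single k (1:ℝ)) (x k) := by
    have := (((hasDerivAt_id (x k)).sub_const (x k)).smul_const
      (EuclideanSpace.single k (1:ℝ))).const_add x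
    simpa using this
  have h2 : HasDerivAt (f ∘ fun s : ℝ => x + (s - x k) • EuclideanSpace.single k (1:ℝ))
      (fderiv ℝ f x (EuclideanSpace.single k (1:ℝ))) (x k) :=
    HasFDerivAt.comp_hasDerivAt _ (by simpa using hx.hasFDerivAt) h1
  have heq : (fun s : ℝ => f (updE x k s))
      = f ∘ fun s : ℝ => x + (s - x k) • EuclideanSpace.single k (1:ℝ) := by
    funext s; simp [updE_eq]
  rw [heq]; exact h2

lemma tendsto_gseq (x : EuclideanSpace ℝ (Fin t)) (k : Fin t)
    (hx : DifferentiableAt ℝ f x) :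
    Tendsto (fun j : ℕ => gseq f k j x) atTop
      (nhds (fderiv ℝ f x (EuclideanSpace.single k (1:ℝ)))) := by
  have hD := hasDerivAt_updE x k hx
  rw [hasDerivAt_iff_tendsto_slope] at hD
  have hseq : Tendsto (fun j : ℕ => x k + ((j:ℝ)+1)⁻¹) atTop (nhdsWithin (x k) {x k}ᶜ) := by
    apply tendsto_nhdsWithin_of_tendsto_nhds_of_eventually_within
    · have h0 : Tendsto (fun j : ℕ => ((j:ℝ)+1)⁻¹) atTop (nhds 0) := by
        simpa [one_div] using tendsto_one_div_add_atTop_nhds_zero_nat (𝕜 := ℝ)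
      simpa using (tendsto_const_nhds (x := x k)).add h0
    · filter_upwards with j
      simp only [Set.mem_compl_iff, Set.mem_singleton_iff]
      intro hcontra
      have : ((j:ℝ)+1)⁻¹ = 0 := by linarith [hcontra]
      have : ((j:ℝ)+1)⁻¹ > 0 := by positivity
      linarith
  have hcomp := hD.comp hseq
  have hkey : (slope (fun s : ℝ => f (updE x k s)) (x k)) ∘ (fun j : ℕ => x k + ((j:ℝ)+1)⁻¹)
      = fun j : ℕ => gseq f k j x := by
    funext j
    have h1 : updE x k (x k + ((j:ℝ)+1)⁻¹)
        = x + ((j:ℝ)+1)⁻¹ • EuclideanSpace.single k (1:ℝ) := by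
      rw [updE_eq, add_sub_cancel_left]
    have h0 : updE x k (x k) = x := by
      rw [updE_eq, sub_self, zero_smul, add_zero]
    simp only [Function.comp_apply, slope_def_field, h1, h0, add_sub_cancel_left, gseq]
    rw [div_eq_mul_inv, inv_inv, mul_comm]
  rw [hkey] at hcomp
  exact hcomp

end Gseq

section PL

variable {t : ℕ}

lemma pseudoLipschitz_continuous {E : Type*} [NormedAddCommGroup E] {ψ : E → ℝ}
    (hψ : PseudoLipschitz ψ) : Continuous ψ := by
  obtain ⟨L, hL, hb⟩ := hψ
  rw [Metric.continuous_iff]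
  intro u ε hε
  set D : ℝ := L * (2 + 2*‖u‖) with hD
  have hD0 : 0 ≤ D := by positivity
  refine ⟨min 1 (ε / (D + 1)), by positivity, fun v hv => ?_⟩
  rw [dist_eq_norm] at hv
  have hv1 : ‖v - u‖ < 1 := lt_of_lt_of_le hv (min_le_left _ _)
  have hv2 : ‖v - u‖ < ε / (D + 1) := lt_of_lt_of_le hv (min_le_right _ _)
  have h2 : ‖v‖ ≤ ‖u‖ + 1 := by
    have := abs_norm_sub_norm_le v u
    have h3 := abs_le.mp this
    linarith [h3.1, h3.2]
  have hb' := hb v u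
  rw [Real.dist_eq]
  have hmul : ‖v - u‖ * (D + 1) < ε := by
    rw [← lt_div_iff₀ (by positivity)]
    exact hv2
  calc |ψ v - ψ u| ≤ L * ‖v - u‖ * (1 + ‖v‖ + ‖u‖) := hb'
    _ ≤ ‖v - u‖ * (D + 1) := by
        have hn : (1:ℝ) + ‖v‖ + ‖u‖ ≤ 2 + 2*‖u‖ := by linarith
        have := mul_le_mul_of_nonneg_left hn (mul_nonneg hL.le (norm_nonneg (v - u)))
        nlinarith [norm_nonneg (v - u)]
    _ < ε := hmul

lemma pseudoLipschitz_comp_snoc {ψ : EuclideanSpace ℝ (Fin (t+1)) → ℝ}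
    (hψ : PseudoLipschitz ψ) (G : EuclideanSpace ℝ (Fin t) → ℝ) (K : ℝ) (hK : 0 ≤ K)
    (hG : ∀ x y, |G x - G y| ≤ K * ‖x - y‖) :
    PseudoLipschitz (fun x => ψ (snocE x (G x))) := by
  obtain ⟨L, hL, hb⟩ := hψ
  refine ⟨L * (1+K) * (1 + 2*|G 0| + K), by positivity, fun x y => ?_⟩
  have hd : ‖snocE x (G x) - snocE y (G y)‖ ≤ (1+K) * ‖x - y‖ := by
    have := norm_snocE_sub_le x y (G x) (G y)
    have := hG x y
    nlinarith [norm_nonneg (x - y)]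
  have hGx : |G x| ≤ |G 0| + K * ‖x‖ := by
    have h1 := hG x 0
    rw [sub_zero] at h1
    have := abs_sub_abs_le_abs_sub (G x) (G 0)
    linarith
  have hGy : |G y| ≤ |G 0| + K * ‖y‖ := by
    have h1 := hG y 0
    rw [sub_zero] at h1
    have := abs_sub_abs_le_abs_sub (G y) (G 0)
    linarith
  have hnx : ‖snocE x (G x)‖ ≤ ‖x‖ + |G x| := norm_snocE_le x (G x)
  have hny : ‖snocE y (G y)‖ ≤ ‖y‖ + |G y| := norm_snocE_le y (G y)
  have hsum : 1 + ‖snocE x (G x)‖ + ‖snocE y (G y)‖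
      ≤ (1 + 2*|G 0| + K) * (1 + ‖x‖ + ‖y‖) := by
    nlinarith [norm_nonneg x, norm_nonneg y, abs_nonneg (G 0)]
  calc |ψ (snocE x (G x)) - ψ (snocE y (G y))|
      ≤ L * ‖snocE x (G x) - snocE y (G y)‖ * (1 + ‖snocE x (G x)‖ + ‖snocE y (G y)‖) :=
        hb _ _
    _ ≤ L * ((1+K) * ‖x - y‖) * ((1 + 2*|G 0| + K) * (1 + ‖x‖ + ‖y‖)) := by
        apply mul_le_mul
        · exact mul_le_mul_of_nonneg_left hd hL.le
        · exact hsum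
        · positivity
        · positivity
    _ = L * (1+K) * (1 + 2*|G 0| + K) * ‖x - y‖ * (1 + ‖x‖ + ‖y‖) := by ring

lemma pseudoLipschitz_sq :
    PseudoLipschitz (fun x : EuclideanSpace ℝ (Fin t) => ‖x‖^2) := by
  refine ⟨1, one_pos, fun u v => ?_⟩
  have h1 := abs_norm_sub_norm_le u v
  have h2 : |‖u‖^2 - ‖v‖^2| = |‖u‖ - ‖v‖| * (‖u‖ + ‖v‖) := by
    rw [← abs_of_nonneg (by positivity : (0:ℝ) ≤ ‖u‖ + ‖v‖), ← abs_mul]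
    ring_nf
  rw [h2]
  nlinarith [norm_nonneg u, norm_nonneg v, norm_nonneg (u - v), abs_nonneg (‖u‖ - ‖v‖)]

end PL

/-! ### The Lipschitz upper envelope -/

/-- Lipschitz (constant `m`) upper envelope of `h`. -/
noncomputable def env {E : Type*} [NormedAddCommGroup E] (h : E → ℝ) (m : ℕ) (x : E) : ℝ :=
  ⨆ y, (h y - (m:ℝ) * ‖x - y‖)

section Env

variable {E : Type*} [NormedAddCommGroup E] {h : E → ℝ} {B : ℝ}

lemma env_bddAbove (hB : ∀ y, h y ≤ B) (m : ℕ) (x : E) :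
    BddAbove (Set.range fun y => h y - (m:ℝ) * ‖x - y‖) := by
  refine ⟨B, ?_⟩
  rintro _ ⟨y, rfl⟩
  have h1 := hB y
  have h2 : (0:ℝ) ≤ (m:ℝ) * ‖x - y‖ := by positivity
  dsimp only
  linarith

lemma le_env (hB : ∀ y, h y ≤ B) (m : ℕ) (x : E) : h x ≤ env h m x := by
  have := le_ciSup (env_bddAbove hB m x) x
  simpa [env] using this

lemma env_nonneg (h0 : ∀ y, 0 ≤ h y) (hB : ∀ y, h y ≤ B) (m : ℕ) (x : E) :
    0 ≤ env h m x := (h0 x).trans (le_env hB m x)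

lemma env_le (h0 : ∀ y, 0 ≤ h y) (hB : ∀ y, h y ≤ B) (m : ℕ) (x : E) : env h m x ≤ B := by
  apply ciSup_le
  intro y
  have h1 := hB y
  have h2 : (0:ℝ) ≤ (m:ℝ) * ‖x - y‖ := by positivity
  linarith

lemma env_sub_le (hB : ∀ y, h y ≤ B) (m : ℕ) (x x' : E) :
    env h m x ≤ env h m x' + (m:ℝ) * ‖x - x'‖ := by
  apply ciSup_le
  intro y
  have htri : ‖x' - y‖ ≤ ‖x' - x‖ + ‖x - y‖ := by
    calc ‖x' - y‖ = ‖(x' - x) + (x - y)‖ := by abel_nf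
      _ ≤ ‖x' - x‖ + ‖x - y‖ := norm_add_le _ _
  have h1 : h y - (m:ℝ) * ‖x' - y‖ ≤ env h m x' := le_ciSup (env_bddAbove hB m x') y
  have h2 : ‖x' - x‖ = ‖x - x'‖ := norm_sub_rev _ _
  have hm : (0:ℝ) ≤ (m:ℝ) := Nat.cast_nonneg m
  nlinarith

lemma env_abs_sub_le (hB : ∀ y, h y ≤ B) (m : ℕ) (x x' : E) :
    |env h m x - env h m x'| ≤ (m:ℝ) * ‖x - x'‖ := by
  rw [abs_le]
  constructor
  · have := env_sub_le hB m x' x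
    rw [norm_sub_rev] at this
    linarith
  · have := env_sub_le hB m x x'
    linarith

lemma env_continuous (hB : ∀ y, h y ≤ B) (m : ℕ) : Continuous (env h m) := by
  apply (LipschitzWith.of_dist_le_mul (K := (m : NNReal)) (f := env h m) ?_).continuous
  intro x y
  rw [Real.dist_eq, dist_eq_norm]
  have := env_abs_sub_le hB m x y
  push_cast
  exact this

lemma env_anti (hB : ∀ y, h y ≤ B) {m m' : ℕ} (hmm : m ≤ m') (x : E) :
    env h m' x ≤ env h m x := by
  apply ciSup_le
  intro y
  calc h y - (m':ℝ) * ‖x - y‖ ≤ h y - (m:ℝ) * ‖x - y‖ := by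
        have : (m:ℝ) ≤ (m':ℝ) := by exact_mod_cast hmm
        nlinarith [norm_nonneg (x - y)]
    _ ≤ env h m x := le_ciSup (env_bddAbove hB m x) y

lemma env_tendsto (h0 : ∀ y, 0 ≤ h y) (hB : ∀ y, h y ≤ B) {x : E}
    (hc : ContinuousAt h x) :
    Tendsto (fun m : ℕ => env h m x) atTop (nhds (h x)) := by
  rw [Metric.tendsto_nhds]
  intro ε hε
  obtain ⟨r, hr, hball⟩ := Metric.continuousAt_iff.mp hc (ε/2) (by positivity)
  obtain ⟨m₀, hm₀⟩ := exists_nat_ge (B / r)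
  filter_upwards [eventually_ge_atTop m₀] with m hm
  have hub : env h m x ≤ h x + ε/2 := by
    apply ciSup_le
    intro y
    rcases lt_or_ge ‖x - y‖ r with hy | hy
    · have hdy : dist y x < r := by rw [dist_eq_norm, norm_sub_rev]; exact hy
      have := hball hdy
      rw [Real.dist_eq, abs_lt] at this
      have h2 : (0:ℝ) ≤ (m:ℝ) * ‖x - y‖ := by positivity
      linarith [this.2]
    · have hmr : B ≤ (m:ℝ) * r := by
        have h1 : B / r ≤ (m:ℝ) := le_trans hm₀ (by exact_mod_cast hm)
        rw [div_le_iff₀ hr] at h1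
        linarith [h1]
      have h2 : (m:ℝ) * r ≤ (m:ℝ) * ‖x - y‖ :=
        mul_le_mul_of_nonneg_left hy (Nat.cast_nonneg m)
      have := hB y
      have := h0 x
      linarith
  have hlb : h x ≤ env h m x := le_env hB m x
  rw [Real.dist_eq, abs_lt]
  constructor <;> linarith

end Env

set_option maxHeartbeats 1600000 in
/-- Wasserstein-2 convergence is preserved when appending the (a.e. defined)
partial derivative `∂f/∂x_k` of a Lipschitz function `f`, provided the law of `V` is
absolutely continuous w.r.t. Lebesgue measure and the chosen version `g` of the derivative
is continuous at almost every point of the law of `V`. -/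
theorem statement1 {t : ℕ} (ht : 1 ≤ t) {L₀ : NNReal}
    (f : EuclideanSpace ℝ (Fin t) → ℝ) (hf : LipschitzWith L₀ f) (k : Fin t)
    (g : EuclideanSpace ℝ (Fin t) → ℝ) (hgmeas : Measurable g)
    (hgbd : ∀ x, |g x| ≤ L₀)
    (hg : ∀ (x : EuclideanSpace ℝ (Fin t)) (d : ℝ),
      HasDerivAt (fun s : ℝ => f (updE x k s)) d ((WithLp.equiv 2 (Fin t → ℝ)) x k) →
      g x = d)
    (v : ∀ n : ℕ, Fin n → EuclideanSpace ℝ (Fin t))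
    {Ωs : Type*} [MeasureSpace Ωs] [IsProbabilityMeasure (ℙ : Measure Ωs)]
    (V : Ωs → EuclideanSpace ℝ (Fin t)) (hVmeas : Measurable V) (hV : MemLp V 2)
    (hconv : ConvW2 v V)
    (hac : (Measure.map V ℙ) ≪ (volume : Measure (EuclideanSpace ℝ (Fin t))))
    (hcont : ∀ᵐ x ∂(Measure.map V ℙ), ContinuousAt g x) :
    ConvW2 (fun n i => snocE (v n i) (g (v n i))) (fun ω => snocE (V ω) (g (V ω))) := by
  intro ψ hψ
  show Tendsto (fun n : ℕ => (n:ℝ)⁻¹ * ∑ i : Fin n, ψ (snocE (v n i) (g (v n i)))) atTop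
    (nhds (∫ ω, ψ (snocE (V ω) (g (V ω)))))
  obtain ⟨L, hL, hLip⟩ := hψ
  set c₀ : ℝ := (L₀ : ℝ) with hc₀def
  have hc₀ : 0 ≤ c₀ := L₀.coe_nonneg
  set c : ℝ := 1 + 2 * c₀ with hcdef
  have hc1 : 1 ≤ c := by simp only [hcdef]; linarith
  have hgs : ∀ (j' : ℕ) (y : EuclideanSpace ℝ (Fin t)), |gseq f k j' y| ≤ c₀ :=
    fun j' y => abs_gseq_le hf j' y
  -- almost sure convergence of the difference quotients
  have hvol : ∀ᵐ x ∂(volume : Measure (EuclideanSpace ℝ (Fin t))), DifferentiableAt ℝ f x :=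
    hf.ae_differentiableAt
  have hmap1 : ∀ᵐ x ∂(Measure.map V ℙ), DifferentiableAt ℝ f x := hac.ae_le hvol
  have hmap2 : ∀ᵐ x ∂(Measure.map V ℙ),
      Tendsto (fun j : ℕ => gseq f k j x) atTop (nhds (g x)) ∧ ContinuousAt g x := by
    filter_upwards [hmap1, hcont] with x hx hcx
    refine ⟨?_, hcx⟩
    have hd := hasDerivAt_updE (f := f) x k hx
    have hgx : g x = fderiv ℝ f x (EuclideanSpace.single k (1:ℝ)) :=
      hg x _ (by simpa using hd)
    rw [hgx]
    exact tendsto_gseq x k hx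
  have hΩ : ∀ᵐ ω, Tendsto (fun j : ℕ => gseq f k j (V ω)) atTop (nhds (g (V ω)))
      ∧ ContinuousAt g (V ω) := ae_of_ae_map hVmeas.aemeasurable hmap2
  -- integrability facts
  have hV1 : Integrable V ℙ := (hV.mono_exponent one_le_two).integrable le_rfl
  have hVnorm : Integrable (fun ω => ‖V ω‖) ℙ := hV1.norm
  have hVsq : Integrable (fun ω => ‖V ω‖^2) ℙ := by
    have h2 := hV.integrable_norm_rpow (by norm_num) (by norm_num)
    refine h2.congr (Filter.Eventually.of_forall fun ω => ?_)
    show ‖V ω‖ ^ (ENNReal.toReal 2) = ‖V ω‖ ^ (2:ℕ)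
    rw [show (ENNReal.toReal 2) = ((2:ℕ):ℝ) by norm_num, Real.rpow_natCast]
  have hψcont : Continuous ψ := pseudoLipschitz_continuous ⟨L, hL, hLip⟩
  -- uniform bound on |ψ (snocE x a)| for |a| ≤ c₀
  have hψbd : ∀ (x : EuclideanSpace ℝ (Fin t)) (a : ℝ), |a| ≤ c₀ →
      |ψ (snocE x a)| ≤ (|ψ 0| + L*c₀ + 2*L*c₀^2) + L*‖x‖ + 2*L*‖x‖^2 := by
    intro x a ha
    have h1 := hLip (snocE x a) 0
    simp only [sub_zero, norm_zero, add_zero] at h1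
    have hs : ‖snocE x a‖ ≤ ‖x‖ + c₀ := le_trans (norm_snocE_le x a) (by linarith)
    have hs0 : (0:ℝ) ≤ ‖snocE x a‖ := norm_nonneg _
    have hs2 : ‖snocE x a‖^2 ≤ (‖x‖ + c₀)^2 := by nlinarith [norm_nonneg x]
    have habs := abs_sub_abs_le_abs_sub (ψ (snocE x a)) (ψ 0)
    nlinarith [norm_nonneg x, sq_nonneg (‖x‖ - c₀), hL.le]
  -- continuity of the maps x ↦ ψ (snocE x (gseq f k j x))
  have hφcont : ∀ j : ℕ, Continuous (fun x => ψ (snocE x (gseq f k j x))) := fun j =>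
    hψcont.comp (continuous_snocE.comp (continuous_id.prodMk (continuous_gseq hf j)))
  -- measurability of the limit integrand
  have hlim_meas : AEStronglyMeasurable (fun ω => ψ (snocE (V ω) (g (V ω)))) ℙ := by
    have hm : Measurable (fun ω => snocE (V ω) (g (V ω))) :=
      continuous_snocE.measurable.comp (hVmeas.prodMk (hgmeas.comp hVmeas))
    exact (hψcont.measurable.comp hm).aestronglyMeasurable
  -- DCT (a): convergence of ∫ ψ (snocE (V ω) (gseq j (V ω)))
  have hIa : Tendsto (fun j : ℕ => ∫ ω, ψ (snocE (V ω) (gseq f k j (V ω)))) atTop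
      (nhds (∫ ω, ψ (snocE (V ω) (g (V ω))))) := by
    apply tendsto_integral_of_dominated_convergence
      (bound := fun ω => (|ψ 0| + L*c₀ + 2*L*c₀^2) + L*‖V ω‖ + 2*L*‖V ω‖^2)
    · intro j
      exact ((hφcont j).measurable.comp hVmeas).aestronglyMeasurable
    · exact (((integrable_const _).add (hVnorm.const_mul L)).add (hVsq.const_mul (2*L)))
    · intro j
      filter_upwards with ω
      rw [Real.norm_eq_abs]
      exact hψbd (V ω) _ (hgs j (V ω))
    · filter_upwards [hΩ] with ω hω
      have hconta : Continuous (fun a : ℝ => ψ (snocE (V ω) a)) :=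
        hψcont.comp (continuous_snocE.comp (continuous_const.prodMk continuous_id))
      exact (hconta.tendsto (g (V ω))).comp hω.1
  -- DCT (b): ∫ |g (V ω) - gseq j (V ω)| → 0
  have hDb : Tendsto (fun j : ℕ => ∫ ω, |g (V ω) - gseq f k j (V ω)|) atTop (nhds 0) := by
    have h0 : (0:ℝ) = ∫ _ : Ωs, (0:ℝ) := by simp
    rw [h0]
    apply tendsto_integral_of_dominated_convergence (bound := fun _ => 2*c₀)
    · intro j
      exact (((hgmeas.comp hVmeas).sub
        (((continuous_gseq hf j).measurable).comp hVmeas)).abs).aestronglyMeasurable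
    · exact integrable_const _
    · intro j
      filter_upwards with ω
      rw [Real.norm_eq_abs, abs_abs]
      have := abs_sub (g (V ω)) (gseq f k j (V ω))
      have h1 := hgbd (V ω)
      have h2 := hgs j (V ω)
      linarith
    · filter_upwards [hΩ] with ω hω
      have := (tendsto_const_nhds (x := g (V ω)) (f := atTop)).sub hω.1
      simpa using this.abs
  -- empirical second moments
  have hq : Tendsto (fun n : ℕ => (n:ℝ)⁻¹ * ∑ i : Fin n, ‖v n i‖^2) atTop
      (nhds (∫ ω, ‖V ω‖^2)) := hconv _ pseudoLipschitz_sq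
  set Msq : ℝ := ∫ ω, ‖V ω‖^2 with hMsqdef
  have hMsq0 : 0 ≤ Msq := integral_nonneg (fun ω => by positivity)
  set M : ℝ := Msq + 1 with hMdef
  have hM0 : 0 ≤ M := by linarith
  -- start the ε argument
  rw [Metric.tendsto_nhds]
  intro ε hε
  set C₁ : ℝ := 2*c₀*(c+2) with hC₁def
  have hC₁0 : 0 ≤ C₁ := by positivity
  -- choose R
  obtain ⟨R, hR1, hRb⟩ : ∃ R : ℝ, 1 ≤ R ∧ L*C₁*(1+M)/R < ε/6 := by
    refine ⟨max 1 (6*L*C₁*(1+M)/ε + 1), le_max_left _ _, ?_⟩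
    have hR0 : (0:ℝ) < max 1 (6*L*C₁*(1+M)/ε + 1) := lt_of_lt_of_le one_pos (le_max_left _ _)
    rw [div_lt_iff₀ hR0]
    have hmaxge : 6*L*C₁*(1+M)/ε + 1 ≤ max 1 (6*L*C₁*(1+M)/ε + 1) := le_max_right _ _
    have hkey : ε/6 * (6*L*C₁*(1+M)/ε) = L*C₁*(1+M) := by
      field_simp
    calc L*C₁*(1+M) < ε/6 * (6*L*C₁*(1+M)/ε + 1) := by nlinarith
      _ ≤ ε/6 * max 1 (6*L*C₁*(1+M)/ε + 1) :=
          mul_le_mul_of_nonneg_left hmaxge (by positivity)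
  have hR0 : (0:ℝ) < R := lt_of_lt_of_le one_pos hR1
  -- choose j
  have hjev : ∀ᶠ j : ℕ in atTop,
      dist (∫ ω, ψ (snocE (V ω) (gseq f k j (V ω)))) (∫ ω, ψ (snocE (V ω) (g (V ω)))) < ε/3
      ∧ L*(c+2*R)*(∫ ω, |g (V ω) - gseq f k j (V ω)|) < ε/12 := by
    refine (Metric.tendsto_nhds.mp hIa (ε/3) (by positivity)).and ?_
    have h1 := hDb.const_mul (L*(c+2*R))
    rw [mul_zero] at h1
    exact h1.eventually_lt_const (by positivity)
  obtain ⟨j, hj1, hj2⟩ := hjev.exists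
  -- the discrepancy function and its envelope
  set h : EuclideanSpace ℝ (Fin t) → ℝ := fun x => |g x - gseq f k j x| with hhdef
  have h0 : ∀ y, 0 ≤ h y := fun y => abs_nonneg _
  have hB : ∀ y, h y ≤ 2*c₀ := by
    intro y
    have h1 := hgbd y
    have h2 := hgs j y
    have := abs_sub (g y) (gseq f k j y)
    simp only [hhdef]
    linarith
  -- DCT (c): ∫ env h m (V ω) → ∫ h (V ω)
  have hc3 : Tendsto (fun m : ℕ => ∫ ω, env h m (V ω)) atTop (nhds (∫ ω, h (V ω))) := by
    apply tendsto_integral_of_dominated_convergence (bound := fun _ => 2*c₀)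
    · intro m
      exact (((env_continuous hB m).measurable).comp hVmeas).aestronglyMeasurable
    · exact integrable_const _
    · intro m
      filter_upwards with ω
      rw [Real.norm_eq_abs, abs_of_nonneg (env_nonneg h0 hB m (V ω))]
      exact env_le h0 hB m (V ω)
    · filter_upwards [hΩ] with ω hω
      have hch : ContinuousAt h (V ω) := by
        have : ContinuousAt (fun x => g x - gseq f k j x) (V ω) :=
          hω.2.sub ((continuous_gseq hf j).continuousAt)
        exact this.abs
      exact env_tendsto h0 hB hch
  -- ∫ h (V ω) coincides with the quantity controlled by hj2
  have hDh : (∫ ω, h (V ω)) = ∫ ω, |g (V ω) - gseq f k j (V ω)| := rfl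
  -- choose m
  have hmev : ∀ᶠ m : ℕ in atTop, L*(c+2*R)*(∫ ω, env h m (V ω)) < ε/6 := by
    have h1 := hc3.const_mul (L*(c+2*R))
    apply h1.eventually_lt_const
    rw [hDh]
    linarith
  obtain ⟨m, hm⟩ := hmev.exists
  -- pseudo-Lipschitz test functions for hconv
  have plj : PseudoLipschitz (fun x => ψ (snocE x (gseq f k j x))) := by
    apply pseudoLipschitz_comp_snoc ⟨L, hL, hLip⟩ _ (((j:ℝ)+1) * (2*c₀)) (by positivity)
    exact lipschitz_gseq' hf j
  have plenv : PseudoLipschitz (env h m) := by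
    refine ⟨(m:ℝ)+1, by positivity, fun x y => ?_⟩
    have h1 := env_abs_sub_le hB m x y
    calc |env h m x - env h m y| ≤ (m:ℝ) * ‖x - y‖ := h1
      _ ≤ ((m:ℝ)+1) * ‖x - y‖ * (1 + ‖x‖ + ‖y‖) := by
          have h2 : (m:ℝ) * ‖x - y‖ ≤ ((m:ℝ)+1) * ‖x - y‖ := by
            nlinarith [norm_nonneg (x - y)]
          have h4 : ((m:ℝ)+1) * ‖x - y‖ * 1 ≤ ((m:ℝ)+1) * ‖x - y‖ * (1 + ‖x‖ + ‖y‖) := by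
            apply mul_le_mul_of_nonneg_left
              (by linarith [norm_nonneg x, norm_nonneg y]) (by positivity)
          nlinarith
  have hSj := hconv _ plj
  have hSenv := hconv _ plenv
  -- eventual statements in n
  have hE1 : ∀ᶠ n : ℕ in atTop,
      dist ((n:ℝ)⁻¹ * ∑ i : Fin n, ψ (snocE (v n i) (gseq f k j (v n i))))
        (∫ ω, ψ (snocE (V ω) (gseq f k j (V ω)))) < ε/3 :=
    Metric.tendsto_nhds.mp hSj (ε/3) (by positivity)
  have hE2 : ∀ᶠ n : ℕ in atTop,
      L*(c+2*R)*((n:ℝ)⁻¹ * ∑ i : Fin n, env h m (v n i)) < ε/6 := by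
    have h1 := hSenv.const_mul (L*(c+2*R))
    exact h1.eventually_lt_const hm
  have hE3 : ∀ᶠ n : ℕ in atTop, (n:ℝ)⁻¹ * ∑ i : Fin n, ‖v n i‖^2 < M := by
    apply hq.eventually_lt_const
    simp only [hMdef]
    linarith
  have hE4 : ∀ᶠ n : ℕ in atTop, 1 ≤ n := eventually_ge_atTop 1
  filter_upwards [hE1, hE2, hE3, hE4] with n h1 h2 h3 h4
  -- pointwise estimate
  set K1 : ℝ := L*(c+2*R) with hK1def
  set K2 : ℝ := L*C₁/R with hK2def
  have hK10 : 0 ≤ K1 := by positivity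
  have hK20 : 0 ≤ K2 := by positivity
  have pt : ∀ x : EuclideanSpace ℝ (Fin t),
      |ψ (snocE x (g x)) - ψ (snocE x (gseq f k j x))|
        ≤ K1 * env h m x + (K2 + K2*‖x‖^2) := by
    intro x
    -- first: |ψ ... - ψ ...| ≤ L * h x * (c + 2‖x‖)
    have hd : ‖snocE x (g x) - snocE x (gseq f k j x)‖ ≤ h x := by
      have h5 := norm_snocE_sub_le x x (g x) (gseq f k j x)
      simp only [sub_self, norm_zero, zero_add] at h5
      exact h5
    have hna : ‖snocE x (g x)‖ ≤ ‖x‖ + c₀ :=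
      le_trans (norm_snocE_le x (g x)) (by linarith [hgbd x])
    have hnb : ‖snocE x (gseq f k j x)‖ ≤ ‖x‖ + c₀ :=
      le_trans (norm_snocE_le x (gseq f k j x)) (by linarith [hgs j x])
    have hw : 1 + ‖snocE x (g x)‖ + ‖snocE x (gseq f k j x)‖ ≤ c + 2*‖x‖ := by
      simp only [hcdef]; linarith
    have hstep : |ψ (snocE x (g x)) - ψ (snocE x (gseq f k j x))|
        ≤ L * (h x * (c + 2*‖x‖)) := by
      have hmono : ‖snocE x (g x) - snocE x (gseq f k j x)‖ *
          (1 + ‖snocE x (g x)‖ + ‖snocE x (gseq f k j x)‖) ≤ h x * (c + 2*‖x‖) :=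
        mul_le_mul hd hw (by positivity) (h0 x)
      calc |ψ (snocE x (g x)) - ψ (snocE x (gseq f k j x))|
          ≤ L * ‖snocE x (g x) - snocE x (gseq f k j x)‖ *
            (1 + ‖snocE x (g x)‖ + ‖snocE x (gseq f k j x)‖) := hLip _ _
        _ ≤ L * (h x * (c + 2*‖x‖)) := by
            rw [mul_assoc]
            exact mul_le_mul_of_nonneg_left hmono hL.le
    -- second: h x * (c + 2‖x‖) ≤ (c+2R) env + (C₁/R)(1+‖x‖²)
    have hkey : h x * (c + 2*‖x‖) ≤ (c+2*R) * env h m x + (C₁/R) * (1+‖x‖^2) := by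
      rcases le_or_gt ‖x‖ R with hxR | hxR
      · have hm1 : h x * (c + 2*‖x‖) ≤ env h m x * (c + 2*R) :=
          mul_le_mul (le_env hB m x) (by linarith) (by positivity) (env_nonneg h0 hB m x)
        have hpos : 0 ≤ (C₁/R) * (1+‖x‖^2) := by positivity
        calc h x * (c + 2*‖x‖) ≤ env h m x * (c + 2*R) := hm1
          _ = (c+2*R) * env h m x := mul_comm _ _
          _ ≤ (c+2*R) * env h m x + (C₁/R) * (1+‖x‖^2) := le_add_of_nonneg_right hpos
      · have henv : 0 ≤ (c+2*R) * env h m x := by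
          have := env_nonneg h0 hB m x
          positivity
        have e1 : (c + 2*‖x‖) * R ≤ (c+2) * (1+‖x‖^2) := by
          have e2 : (c + 2*‖x‖) * R ≤ (c + 2*‖x‖) * ‖x‖ :=
            mul_le_mul_of_nonneg_left hxR.le (by positivity)
          nlinarith [sq_nonneg (‖x‖ - 1), norm_nonneg x]
        have e3 : h x * (c + 2*‖x‖) ≤ C₁ * (1+‖x‖^2) / R := by
          rw [le_div_iff₀ hR0]
          have e4 : h x * ((c + 2*‖x‖) * R) ≤ (2*c₀) * ((c+2) * (1+‖x‖^2)) := by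
            apply mul_le_mul (hB x) e1 (by positivity) (by positivity)
          calc h x * (c + 2*‖x‖) * R = h x * ((c + 2*‖x‖) * R) := by ring
            _ ≤ (2*c₀) * ((c+2) * (1+‖x‖^2)) := e4
            _ = C₁ * (1+‖x‖^2) := by rw [hC₁def]; ring
        calc h x * (c + 2*‖x‖) ≤ C₁ * (1+‖x‖^2) / R := e3
          _ = (C₁/R) * (1+‖x‖^2) := by ring
          _ ≤ (c+2*R) * env h m x + (C₁/R) * (1+‖x‖^2) := le_add_of_nonneg_left henv
    calc |ψ (snocE x (g x)) - ψ (snocE x (gseq f k j x))| ≤ L * (h x * (c + 2*‖x‖)) := hstep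
      _ ≤ L * ((c+2*R) * env h m x + (C₁/R) * (1+‖x‖^2)) :=
          mul_le_mul_of_nonneg_left hkey hL.le
      _ = K1 * env h m x + (K2 + K2*‖x‖^2) := by rw [hK1def, hK2def]; ring
  -- sum estimate
  have hn0 : ((n:ℝ))⁻¹ * (n:ℝ) = 1 := by
    rw [inv_mul_cancel₀]
    exact_mod_cast (Nat.pos_of_ne_zero (by omega)).ne'
  have hinv0 : (0:ℝ) ≤ (n:ℝ)⁻¹ := by positivity
  have hdiff : |((n:ℝ)⁻¹ * ∑ i : Fin n, ψ (snocE (v n i) (g (v n i))))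
      - ((n:ℝ)⁻¹ * ∑ i : Fin n, ψ (snocE (v n i) (gseq f k j (v n i))))|
      ≤ K1 * ((n:ℝ)⁻¹ * ∑ i : Fin n, env h m (v n i))
        + (K2 + K2 * ((n:ℝ)⁻¹ * ∑ i : Fin n, ‖v n i‖^2)) := by
    rw [← mul_sub, ← Finset.sum_sub_distrib, abs_mul, abs_of_nonneg hinv0]
    have hs1 : |∑ i : Fin n, (ψ (snocE (v n i) (g (v n i)))
        - ψ (snocE (v n i) (gseq f k j (v n i))))|
        ≤ ∑ i : Fin n, (K1 * env h m (v n i) + (K2 + K2*‖v n i‖^2)) := by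
      refine le_trans (Finset.abs_sum_le_sum_abs _ _) (Finset.sum_le_sum fun i _ => pt _)
    have hs2 : (n:ℝ)⁻¹ * |∑ i : Fin n, (ψ (snocE (v n i) (g (v n i)))
        - ψ (snocE (v n i) (gseq f k j (v n i))))|
        ≤ (n:ℝ)⁻¹ * ∑ i : Fin n, (K1 * env h m (v n i) + (K2 + K2*‖v n i‖^2)) :=
      mul_le_mul_of_nonneg_left hs1 hinv0
    refine le_trans hs2 (le_of_eq ?_)
    rw [Finset.sum_add_distrib, Finset.sum_add_distrib, ← Finset.mul_sum, ← Finset.mul_sum,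
      Finset.sum_const, Finset.card_univ, Fintype.card_fin, nsmul_eq_mul]
    have : (n:ℝ)⁻¹ * (K1 * (∑ i : Fin n, env h m (v n i))
        + ((n:ℝ) * K2 + K2 * (∑ i : Fin n, ‖v n i‖^2)))
        = K1 * ((n:ℝ)⁻¹ * ∑ i : Fin n, env h m (v n i))
          + (((n:ℝ)⁻¹ * (n:ℝ)) * K2 + K2 * ((n:ℝ)⁻¹ * ∑ i : Fin n, ‖v n i‖^2)) := by
      ring
    rw [this, hn0, one_mul]
  -- conclude
  rw [Real.dist_eq]
  rw [Real.dist_eq] at h1 hj1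
  have htri : |((n:ℝ)⁻¹ * ∑ i : Fin n, ψ (snocE (v n i) (g (v n i))))
      - (∫ ω, ψ (snocE (V ω) (g (V ω))))|
      ≤ |((n:ℝ)⁻¹ * ∑ i : Fin n, ψ (snocE (v n i) (g (v n i))))
          - ((n:ℝ)⁻¹ * ∑ i : Fin n, ψ (snocE (v n i) (gseq f k j (v n i))))|
        + |((n:ℝ)⁻¹ * ∑ i : Fin n, ψ (snocE (v n i) (gseq f k j (v n i))))
          - (∫ ω, ψ (snocE (V ω) (gseq f k j (V ω))))|
        + |(∫ ω, ψ (snocE (V ω) (gseq f k j (V ω))))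
          - (∫ ω, ψ (snocE (V ω) (g (V ω))))| := by
    have := abs_sub_le ((n:ℝ)⁻¹ * ∑ i : Fin n, ψ (snocE (v n i) (g (v n i))))
      ((n:ℝ)⁻¹ * ∑ i : Fin n, ψ (snocE (v n i) (gseq f k j (v n i))))
      (∫ ω, ψ (snocE (V ω) (g (V ω))))
    have h6 := abs_sub_le ((n:ℝ)⁻¹ * ∑ i : Fin n, ψ (snocE (v n i) (gseq f k j (v n i))))
      (∫ ω, ψ (snocE (V ω) (gseq f k j (V ω)))) (∫ ω, ψ (snocE (V ω) (g (V ω))))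
    linarith
  have hbd2 : K2 + K2 * ((n:ℝ)⁻¹ * ∑ i : Fin n, ‖v n i‖^2) ≤ K2 * (1 + M) := by
    have h5 : (n:ℝ)⁻¹ * ∑ i : Fin n, ‖v n i‖^2 ≤ M := h3.le
    nlinarith
  have hbd3 : K2 * (1 + M) < ε/6 := by
    have : K2 * (1+M) = L*C₁*(1+M)/R := by rw [hK2def]; ring
    rw [this]
    exact hRb
  linarith [h2, hdiff, hj1, h1, htri]
end

section
/- Let σ > 0 and let ν be a nonzero σ-finite Borel measure on ℝ such that for every r ∈ ℝ, 0 < ∫ exp(−(z−r)²/(2σ²)) dν(z) < ∞ and ∫ z² exp(−(z−r)²/(2σ²)) dν(z) < ∞. Define the posterior mean m(r) = (∫ z exp(−(z−r)²/(2σ²)) dν(z)) / (∫ exp(−(z−r)²/(2σ²)) dν(z)) and the posterior variance v(r) = (∫ z² exp(−(z−r)²/(2σ²)) dν(z)) / (∫ exp(−(z−r)²/(2σ²)) dν(z)) − m(r)². Then m is differentiable on ℝ and m′(r) = v(r)/σ² for every r ∈ ℝ. -/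
open MeasureTheory

private lemma expK_deriv (σ : ℝ) (hσ : 0 < σ) (z r : ℝ) :
    HasDerivAt (fun r => Real.exp (-(z - r) ^ 2 / (2 * σ ^ 2)))
      ((z - r) / σ ^ 2 * Real.exp (-(z - r) ^ 2 / (2 * σ ^ 2))) r := by
  have h1 : HasDerivAt (fun r : ℝ => z - r) (-1) r := by
    simpa using (hasDerivAt_id r).const_sub z
  have h2 : HasDerivAt (fun r : ℝ => -(z - r) ^ 2 / (2 * σ ^ 2))
      (-((2 : ℕ) * (z - r) ^ 1 * (-1)) / (2 * σ ^ 2)) r := ((h1.pow 2).neg).div_const _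
  have h3 := h2.exp
  convert h3 using 1
  have hσ2 : σ ^ 2 ≠ 0 := by positivity
  field_simp
  ring

private lemma expK_bound (σ : ℝ) (hσ : 0 < σ) (r₀ r z : ℝ) (hr : |r - r₀| ≤ 1) :
    Real.exp (-(z - r) ^ 2 / (2 * σ ^ 2)) ≤
      Real.exp (1 / (2 * σ ^ 2)) *
        (Real.exp (-(z - (r₀ - 1)) ^ 2 / (2 * σ ^ 2)) +
         Real.exp (-(z - (r₀ + 1)) ^ 2 / (2 * σ ^ 2))) := by
  have hσ2 : (0:ℝ) < 2 * σ ^ 2 := by positivity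
  obtain ⟨hr1, hr2⟩ := abs_le.mp hr
  rcases le_total r₀ z with hz | hz
  · have key : -(z - r) ^ 2 / (2 * σ ^ 2) ≤
        1 / (2 * σ ^ 2) + -(z - (r₀ + 1)) ^ 2 / (2 * σ ^ 2) := by
      rw [← add_div]
      apply div_le_div_of_nonneg_right ?_ hσ2.le |>.trans_eq rfl
      nlinarith [sq_nonneg (z - r), sq_nonneg (r - r₀)]
    calc Real.exp (-(z - r) ^ 2 / (2 * σ ^ 2))
        ≤ Real.exp (1 / (2 * σ ^ 2) + -(z - (r₀ + 1)) ^ 2 / (2 * σ ^ 2)) :=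
          Real.exp_le_exp.mpr key
      _ = Real.exp (1 / (2 * σ ^ 2)) * Real.exp (-(z - (r₀ + 1)) ^ 2 / (2 * σ ^ 2)) :=
          Real.exp_add _ _
      _ ≤ _ := by
          have := Real.exp_pos (-(z - (r₀ - 1)) ^ 2 / (2 * σ ^ 2))
          nlinarith [Real.exp_pos (1 / (2 * σ ^ 2))]
  · have key : -(z - r) ^ 2 / (2 * σ ^ 2) ≤
        1 / (2 * σ ^ 2) + -(z - (r₀ - 1)) ^ 2 / (2 * σ ^ 2) := by
      rw [← add_div]
      apply div_le_div_of_nonneg_right ?_ hσ2.le |>.trans_eq rfl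
      nlinarith [sq_nonneg (z - r), sq_nonneg (r - r₀)]
    calc Real.exp (-(z - r) ^ 2 / (2 * σ ^ 2))
        ≤ Real.exp (1 / (2 * σ ^ 2) + -(z - (r₀ - 1)) ^ 2 / (2 * σ ^ 2)) :=
          Real.exp_le_exp.mpr key
      _ = Real.exp (1 / (2 * σ ^ 2)) * Real.exp (-(z - (r₀ - 1)) ^ 2 / (2 * σ ^ 2)) :=
          Real.exp_add _ _
      _ ≤ _ := by
          have := Real.exp_pos (-(z - (r₀ + 1)) ^ 2 / (2 * σ ^ 2))
          nlinarith [Real.exp_pos (1 / (2 * σ ^ 2))]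

private lemma deriv_integral_aux (σ : ℝ) (hσ : 0 < σ) (ν : Measure ℝ) [SigmaFinite ν]
    (hInt : ∀ r : ℝ, Integrable (fun z => Real.exp (-(z - r) ^ 2 / (2 * σ ^ 2))) ν)
    (hInt2 : ∀ r : ℝ, Integrable (fun z => z ^ 2 * Real.exp (-(z - r) ^ 2 / (2 * σ ^ 2))) ν)
    (c : ℝ → ℝ) (hc : Continuous c)
    (hcInt : ∀ r : ℝ, Integrable (fun z => c z * Real.exp (-(z - r) ^ 2 / (2 * σ ^ 2))) ν)
    (r₀ : ℝ)
    (hc2 : ∀ z r : ℝ, |r - r₀| ≤ 1 → |c z * (z - r)| ≤ (1 + z ^ 2) * (|r₀| + 2)) :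
    HasDerivAt (fun r => ∫ z, c z * Real.exp (-(z - r) ^ 2 / (2 * σ ^ 2)) ∂ν)
      (∫ z, c z * ((z - r₀) / σ ^ 2 * Real.exp (-(z - r₀) ^ 2 / (2 * σ ^ 2))) ∂ν) r₀ := by
  set K : ℝ → ℝ → ℝ := fun r z => Real.exp (-(z - r) ^ 2 / (2 * σ ^ 2)) with hK
  have hσ2 : (0:ℝ) < σ ^ 2 := by positivity
  set C : ℝ := (|r₀| + 2) / σ ^ 2 * Real.exp (1 / (2 * σ ^ 2)) with hC
  have hCpos : 0 < C := by positivity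
  set bound : ℝ → ℝ := fun z => C *
    ((K (r₀ - 1) z + z ^ 2 * K (r₀ - 1) z) + (K (r₀ + 1) z + z ^ 2 * K (r₀ + 1) z)) with hbd
  have bound_int : Integrable bound ν := by
    exact (((hInt (r₀ - 1)).add (hInt2 (r₀ - 1))).add
      ((hInt (r₀ + 1)).add (hInt2 (r₀ + 1)))).const_mul C
  have hKcont : ∀ r : ℝ, Continuous (fun z => K r z) := by
    intro r; fun_prop
  have key := hasDerivAt_integral_of_dominated_loc_of_deriv_le (μ := ν)
    (F := fun r z => c z * K r z)
    (F' := fun r z => c z * ((z - r) / σ ^ 2 * K r z)) (x₀ := r₀)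
    (bound := bound) (s := Metric.ball r₀ 1) (Metric.ball_mem_nhds r₀ one_pos)
    (Filter.Eventually.of_forall fun r =>
      ((hc.mul (hKcont r)).aestronglyMeasurable))
    (hcInt r₀)
    (by
      apply Continuous.aestronglyMeasurable
      fun_prop)
    ?_ bound_int
    (Filter.Eventually.of_forall fun z r _ => (expK_deriv σ hσ z r).const_mul (c z))
  · exact key.2
  · refine Filter.Eventually.of_forall fun z r hr => ?_
    have hr' : |r - r₀| ≤ 1 := le_of_lt (by simpa [Real.dist_eq] using Metric.mem_ball.mp hr)
    have hKpos : 0 < K r z := Real.exp_pos _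
    have hEb := expK_bound σ hσ r₀ r z hr'
    have h1 : ‖c z * ((z - r) / σ ^ 2 * K r z)‖ = |c z * (z - r)| * K r z / σ ^ 2 := by
      rw [Real.norm_eq_abs, abs_mul, abs_mul, abs_div, abs_of_pos hKpos,
        abs_of_pos hσ2, abs_mul]
      ring
    rw [h1]
    have h2 : |c z * (z - r)| * K r z / σ ^ 2 ≤
        ((1 + z ^ 2) * (|r₀| + 2)) *
          (Real.exp (1 / (2 * σ ^ 2)) * (K (r₀ - 1) z + K (r₀ + 1) z)) / σ ^ 2 := by
      apply div_le_div_of_nonneg_right ?_ hσ2.le |>.trans_eq rfl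
      apply mul_le_mul (hc2 z r hr') hEb (le_of_lt hKpos) (by positivity)
    refine h2.trans (le_of_eq ?_)
    simp only [hbd, hC]
    ring

/-- for a Gaussian observation channel with noise variance `σ²` and base
measure `ν`, the posterior mean `m(r)` is differentiable in the observation `r` and its
derivative equals the posterior variance divided by `σ²`. -/
theorem statement4 (σ : ℝ) (hσ : 0 < σ) (ν : Measure ℝ) [SigmaFinite ν] (hν : ν ≠ 0)
    (hInt : ∀ r : ℝ, Integrable (fun z => Real.exp (-(z - r) ^ 2 / (2 * σ ^ 2))) ν)
    (hPos : ∀ r : ℝ, 0 < ∫ z, Real.exp (-(z - r) ^ 2 / (2 * σ ^ 2)) ∂ν)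
    (hInt2 : ∀ r : ℝ, Integrable (fun z => z ^ 2 * Real.exp (-(z - r) ^ 2 / (2 * σ ^ 2))) ν)
    (m V : ℝ → ℝ)
    (hm : ∀ r : ℝ, m r = (∫ z, z * Real.exp (-(z - r) ^ 2 / (2 * σ ^ 2)) ∂ν) /
      (∫ z, Real.exp (-(z - r) ^ 2 / (2 * σ ^ 2)) ∂ν))
    (hV : ∀ r : ℝ, V r = (∫ z, z ^ 2 * Real.exp (-(z - r) ^ 2 / (2 * σ ^ 2)) ∂ν) /
      (∫ z, Real.exp (-(z - r) ^ 2 / (2 * σ ^ 2)) ∂ν) - (m r) ^ 2) :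
    ∀ r : ℝ, HasDerivAt m (V r / σ ^ 2) r := by
  intro r₀
  have hσ2 : (0:ℝ) < σ ^ 2 := by positivity
  have hIntz : ∀ r : ℝ, Integrable (fun z => z * Real.exp (-(z - r) ^ 2 / (2 * σ ^ 2))) ν := by
    intro r
    refine ((hInt r).add (hInt2 r)).mono' ?_ ?_
    · exact (continuous_id.mul (by fun_prop)).aestronglyMeasurable
    · refine Filter.Eventually.of_forall fun z => ?_
      have hKpos : 0 < Real.exp (-(z - r) ^ 2 / (2 * σ ^ 2)) := Real.exp_pos _
      have habs : |z| ≤ 1 + z ^ 2 := by nlinarith [abs_nonneg z, sq_abs z]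
      rw [Real.norm_eq_abs, abs_mul, abs_of_pos hKpos]
      simp only [Pi.add_apply]
      nlinarith [mul_le_mul_of_nonneg_right habs hKpos.le]
  have habs : ∀ z : ℝ, |z| ≤ 1 + z ^ 2 := fun z => by nlinarith [abs_nonneg z, sq_abs z]
  have habsr : ∀ r z : ℝ, |r - r₀| ≤ 1 → |z - r| ≤ |z| + (|r₀| + 1) := by
    intro r z hr
    have h1 : |z - r| ≤ |z| + |r| := by
      rw [sub_eq_add_neg]; exact (abs_add_le _ _).trans (by rw [abs_neg])
    have h2 : |r| ≤ |r₀| + 1 := by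
      calc |r| = |r₀ + (r - r₀)| := by ring_nf
        _ ≤ |r₀| + |r - r₀| := abs_add_le _ _
        _ ≤ |r₀| + 1 := by linarith
    linarith
  have hb1 : ∀ z r : ℝ, |r - r₀| ≤ 1 → |(fun _ : ℝ => (1:ℝ)) z * (z - r)| ≤ (1 + z ^ 2) * (|r₀| + 2) := by
    intro z r hr
    simp only [one_mul]
    have := habsr r z hr
    nlinarith [habs z, abs_nonneg r₀, sq_nonneg z]
  have hb2 : ∀ z r : ℝ, |r - r₀| ≤ 1 → |(fun w : ℝ => w) z * (z - r)| ≤ (1 + z ^ 2) * (|r₀| + 2) := by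
    intro z r hr
    simp only
    rw [abs_mul]
    have h1 := habsr r z hr
    have h2 := habs z
    have h3 := abs_nonneg z
    have h4 := abs_nonneg r₀
    have h5 := sq_abs z
    nlinarith [mul_le_mul_of_nonneg_left h1 h3]
  have hN := deriv_integral_aux σ hσ ν hInt hInt2 (fun _ : ℝ => (1:ℝ)) continuous_const
      (fun r => by simpa using hInt r) r₀ hb1
  have hM := deriv_integral_aux σ hσ ν hInt hInt2 (fun z : ℝ => z) continuous_id
      (fun r => hIntz r) r₀ hb2
  simp only [one_mul] at hN
  have hNne : (∫ z, Real.exp (-(z - r₀) ^ 2 / (2 * σ ^ 2)) ∂ν) ≠ 0 := ne_of_gt (hPos r₀)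
  have hdiv := hM.div hN hNne
  have hmfun : m = fun r => (∫ z, z * Real.exp (-(z - r) ^ 2 / (2 * σ ^ 2)) ∂ν) /
      (∫ z, Real.exp (-(z - r) ^ 2 / (2 * σ ^ 2)) ∂ν) := funext hm
  rw [hmfun]
  convert hdiv using 1
  case e'_4 => rfl
  case e'_5 => rfl
  case e'_8 => rfl
  -- now prove the value equality
  set S : ℝ := ∫ z, z ^ 2 * Real.exp (-(z - r₀) ^ 2 / (2 * σ ^ 2)) ∂ν with hS
  set M : ℝ := ∫ z, z * Real.exp (-(z - r₀) ^ 2 / (2 * σ ^ 2)) ∂ν with hMdef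
  set N : ℝ := ∫ z, Real.exp (-(z - r₀) ^ 2 / (2 * σ ^ 2)) ∂ν with hNdef
  have hM' : (∫ z, z * ((z - r₀) / σ ^ 2 * Real.exp (-(z - r₀) ^ 2 / (2 * σ ^ 2))) ∂ν)
      = (1 / σ ^ 2) * (S - r₀ * M) := by
    have e1 : (fun z : ℝ => z * ((z - r₀) / σ ^ 2 * Real.exp (-(z - r₀) ^ 2 / (2 * σ ^ 2))))
        = fun z : ℝ => (1 / σ ^ 2) * (z ^ 2 * Real.exp (-(z - r₀) ^ 2 / (2 * σ ^ 2))
            - r₀ * (z * Real.exp (-(z - r₀) ^ 2 / (2 * σ ^ 2)))) := by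
      funext z; field_simp
    rw [e1, integral_const_mul,
      integral_sub (hInt2 r₀) ((hIntz r₀).const_mul r₀), integral_const_mul]
  have hN' : (∫ z, (z - r₀) / σ ^ 2 * Real.exp (-(z - r₀) ^ 2 / (2 * σ ^ 2)) ∂ν)
      = (1 / σ ^ 2) * (M - r₀ * N) := by
    have e1 : (fun z : ℝ => (z - r₀) / σ ^ 2 * Real.exp (-(z - r₀) ^ 2 / (2 * σ ^ 2)))
        = fun z : ℝ => (1 / σ ^ 2) * (z * Real.exp (-(z - r₀) ^ 2 / (2 * σ ^ 2))
            - r₀ * Real.exp (-(z - r₀) ^ 2 / (2 * σ ^ 2))) := by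
      funext z; field_simp
    rw [e1, integral_const_mul,
      integral_sub (hIntz r₀) ((hInt r₀).const_mul r₀), integral_const_mul]
  rw [hM', hN', hV r₀, hm r₀]
  rw [← hS, ← hMdef, ← hNdef]
  field_simp
  ring
end

section
/- Let r₀, r₁ ∈ ℝ and σ₀, σ₁ > 0. Define r_P = (r₀σ₁² + r₁σ₀²)/(σ₀² + σ₁²), σ_P² = σ₀²σ₁²/(σ₀² + σ₁²), C_P = exp(−r₀²/(2σ₀²) − r₁²/(2σ₁²) + r_P²/(2σ_P²)), and C_N = exp(−r₁²/(2σ₁²)). Let μ be the measure on ℝ with density w(z) = exp(−(z−r₀)²/(2σ₀²) − (max(z,0)−r₁)²/(2σ₁²)) with respect to Lebesgue measure. Then the pushforward of μ under the map z ↦ max(z, 0) equals C_P · ν_P + C_N · M_N · δ₀, where ν_P is the measure on ℝ with Lebesgue density z ↦ 1_{(0,∞)}(z) · exp(−(z−r_P)²/(2σ_P²)), M_N = ∫_{−∞}^0 exp(−(z−r₀)²/(2σ₀²)) dz, and δ₀ is the Dirac measure at 0. -/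
open MeasureTheory

/-- the marginal law of the output of a ReLU under the joint tilted measure.
The pushforward under `z ↦ max z 0` of the measure with Lebesgue density
`exp(−(z−r₀)²/(2σ₀²) − (max z 0 −r₁)²/(2σ₁²))` equals `C_P · ν_P + C_N · M_N · δ₀`, where
`ν_P` has Lebesgue density `1_{(0,∞)}(z) exp(−(z−r_P)²/(2σ_P²))` and
`M_N = ∫_{−∞}^0 exp(−(z−r₀)²/(2σ₀²)) dz`. -/
theorem statement7 (r₀ r₁ σ₀ σ₁ : ℝ) (hσ₀ : 0 < σ₀) (hσ₁ : 0 < σ₁)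
    (rP σP2 CP CN MN : ℝ)
    (hrP : rP = (r₀ * σ₁ ^ 2 + r₁ * σ₀ ^ 2) / (σ₀ ^ 2 + σ₁ ^ 2))
    (hσP2 : σP2 = σ₀ ^ 2 * σ₁ ^ 2 / (σ₀ ^ 2 + σ₁ ^ 2))
    (hCP : CP = Real.exp (-r₀ ^ 2 / (2 * σ₀ ^ 2) - r₁ ^ 2 / (2 * σ₁ ^ 2) + rP ^ 2 / (2 * σP2)))
    (hCN : CN = Real.exp (-r₁ ^ 2 / (2 * σ₁ ^ 2)))
    (hMN : MN = ∫ z in Set.Iic (0 : ℝ), Real.exp (-(z - r₀) ^ 2 / (2 * σ₀ ^ 2)))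
    (μ νP : Measure ℝ)
    (hμ : μ = volume.withDensity fun z => ENNReal.ofReal
      (Real.exp (-(z - r₀) ^ 2 / (2 * σ₀ ^ 2) - (max z 0 - r₁) ^ 2 / (2 * σ₁ ^ 2))))
    (hνP : νP = volume.withDensity fun z => ENNReal.ofReal
      (Set.indicator (Set.Ioi (0 : ℝ)) (fun w => Real.exp (-(w - rP) ^ 2 / (2 * σP2))) z)) :
    Measure.map (fun z => max z 0) μ =
      ENNReal.ofReal CP • νP + ENNReal.ofReal (CN * MN) • Measure.dirac (0 : ℝ) := by
  have hσ0 : (0:ℝ) < σ₀ ^ 2 := by positivity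
  have hσ1 : (0:ℝ) < σ₁ ^ 2 := by positivity
  have hsum : (0:ℝ) < σ₀ ^ 2 + σ₁ ^ 2 := by positivity
  have hσP : (0:ℝ) < σP2 := by rw [hσP2]; positivity
  set w : ℝ → ℝ := fun z => Real.exp (-(z - r₀) ^ 2 / (2 * σ₀ ^ 2) - (max z 0 - r₁) ^ 2 / (2 * σ₁ ^ 2)) with hw
  set g : ℝ → ℝ := fun z => Real.exp (-(z - rP) ^ 2 / (2 * σP2)) with hg
  set g₀ : ℝ → ℝ := fun z => Real.exp (-(z - r₀) ^ 2 / (2 * σ₀ ^ 2)) with hg0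
  have key1 : ∀ z : ℝ, 0 < z → w z = CP * g z := by
    intro z hz
    simp only [hw, hg, max_eq_left hz.le, hCP, ← Real.exp_add]
    congr 1
    subst hσP2 hrP
    field_simp
    ring
  have key2 : ∀ z : ℝ, z ≤ 0 → w z = CN * g₀ z := by
    intro z hz
    simp only [hw, hg0, max_eq_right hz, hCN, ← Real.exp_add]
    congr 1
    ring
  have hfmeas : Measurable (fun z : ℝ => max z 0) := measurable_id.max measurable_const
  have hwmeas : Measurable fun z => ENNReal.ofReal (w z) := by
    apply ENNReal.measurable_ofReal.comp
    fun_prop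
  have hgmeas : Measurable fun z => ENNReal.ofReal (g z) := by
    apply ENNReal.measurable_ofReal.comp
    fun_prop
  -- integrability of g₀
  have hint : Integrable g₀ := by
    have h1 := integrable_exp_neg_mul_sq (show (0:ℝ) < 1 / (2 * σ₀ ^ 2) by positivity)
    have h2 := h1.comp_sub_right r₀
    refine h2.congr (Filter.Eventually.of_forall fun z => ?_)
    simp only [hg0]
    congr 1
    field_simp
  have hMNnn : 0 ≤ MN := by
    rw [hMN]; exact integral_nonneg fun z => (Real.exp_pos _).le
  have hIic : ∫⁻ z in Set.Iic (0:ℝ), ENNReal.ofReal (w z) = ENNReal.ofReal (CN * MN) := by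
    rw [setLIntegral_congr_fun measurableSet_Iic
      (fun z hz => by rw [key2 z hz])]
    rw [hMN, ENNReal.ofReal_mul (by rw [hCN]; exact (Real.exp_pos _).le)]
    rw [ofReal_integral_eq_lintegral_ofReal hint.integrableOn
      (Filter.Eventually.of_forall fun z => (Real.exp_pos _).le)]
    simp only [ENNReal.ofReal_mul (show (0:ℝ) ≤ CN by rw [hCN]; exact (Real.exp_pos _).le)]
    rw [lintegral_const_mul _ (by apply ENNReal.measurable_ofReal.comp; fun_prop)]
  have hCPnn : 0 ≤ CP := by rw [hCP]; exact (Real.exp_pos _).le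
  ext s hs
  rw [hμ, Measure.map_apply hfmeas hs, withDensity_apply _ (hfmeas hs)]
  have hpre : (fun z : ℝ => max z 0) ⁻¹' s ∩ Set.Ioi 0 = s ∩ Set.Ioi 0 := by
    ext z
    simp only [Set.mem_inter_iff, Set.mem_preimage, Set.mem_Ioi]
    constructor
    · rintro ⟨h1, h2⟩; rw [max_eq_left h2.le] at h1; exact ⟨h1, h2⟩
    · rintro ⟨h1, h2⟩; rw [max_eq_left h2.le]; exact ⟨h1, h2⟩
  have hsplit : ∫⁻ z in (fun z : ℝ => max z 0) ⁻¹' s, ENNReal.ofReal (w z)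
      = (∫⁻ z in s ∩ Set.Ioi 0, ENNReal.ofReal (w z))
        + ∫⁻ z in (fun z : ℝ => max z 0) ⁻¹' s ∩ Set.Iic 0, ENNReal.ofReal (w z) := by
    rw [← hpre, ← lintegral_inter_add_diff _ _ measurableSet_Ioi]
    congr 1
    apply setLIntegral_congr
    rw [Set.diff_eq]
    rw [show (Set.Ioi (0:ℝ))ᶜ = Set.Iic 0 by simp]
    exact Filter.EventuallyEq.rfl
  have hPos : ∫⁻ z in s ∩ Set.Ioi 0, ENNReal.ofReal (w z)
      = ENNReal.ofReal CP * ∫⁻ z in s ∩ Set.Ioi 0, ENNReal.ofReal (g z) := by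
    rw [← lintegral_const_mul _ hgmeas]
    apply setLIntegral_congr_fun (hs.inter measurableSet_Ioi)
    intro z hz; beta_reduce
    rw [key1 z hz.2, ENNReal.ofReal_mul hCPnn]
  have hνPs : νP s = ∫⁻ z in s ∩ Set.Ioi 0, ENNReal.ofReal (g z) := by
    rw [hνP, withDensity_apply _ hs]
    have : ∀ z : ℝ, ENNReal.ofReal (Set.indicator (Set.Ioi (0:ℝ)) (fun w => Real.exp (-(w - rP) ^ 2 / (2 * σP2))) z)
        = Set.indicator (Set.Ioi (0:ℝ)) (fun z => ENNReal.ofReal (g z)) z := by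
      intro z
      by_cases hz : z ∈ Set.Ioi (0:ℝ) <;> simp [hz, hg]
    rw [show (fun z => ENNReal.ofReal ((Set.Ioi (0:ℝ)).indicator g z)) = fun z => Set.indicator (Set.Ioi (0:ℝ)) (fun z => ENNReal.ofReal (g z)) z from funext this]
    rw [lintegral_indicator measurableSet_Ioi _, Measure.restrict_restrict measurableSet_Ioi,
      Set.inter_comm]
  rw [hsplit, hPos]
  simp only [Measure.coe_add, Measure.coe_smul, Pi.add_apply, Pi.smul_apply, smul_eq_mul]
  rw [Measure.dirac_apply' _ hs, hνPs]
  by_cases h0 : (0:ℝ) ∈ s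
  · have : (fun z : ℝ => max z 0) ⁻¹' s ∩ Set.Iic 0 = Set.Iic 0 := by
      ext z
      simp only [Set.mem_inter_iff, Set.mem_preimage, Set.mem_Iic, and_iff_right_iff_imp]
      intro hz
      rwa [max_eq_right hz]
    rw [this, hIic]
    simp [h0]
  · have : (fun z : ℝ => max z 0) ⁻¹' s ∩ Set.Iic 0 = ∅ := by
      ext z
      simp only [Set.mem_inter_iff, Set.mem_preimage, Set.mem_Iic, Set.mem_empty_iff_false,
        iff_false, not_and]
      intro h1 hz
      rw [max_eq_right hz] at h1
      exact h0 h1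
    rw [this]
    simp [h0]
end

section
/- Let t ≥ 1 and let P, Q, Γ, Δ ∈ ℝ^{(t+1)×(t+1)} with P and Q lower triangular and PQ strictly lower triangular (this holds in particular when at least one of P, Q is strictly lower triangular). For j ≥ 1 define F^{(j)}(P, Q, Γ, Δ) = Σ_{i=1}^{j} (PQ)^i Γ ((PQ)ᵀ)^{j−i} + Σ_{i=1}^{j−1} (PQ)^i P Δ Pᵀ ((PQ)ᵀ)^{j−i−1}, and F^{(0)}(P, Q, Γ, Δ) = Γ. For a matrix A ∈ ℝ^{(t+1)×(t+1)} let A_t ∈ ℝ^{t×t} denote its top-left t×t block. Then for every j ≥ 0, the top-left t×t block of F^{(j)}(P, Q, Γ, Δ) equals F^{(j)}(P_t, Q_t, Γ_t, Δ_t). -/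
open Matrix Finset

/-- The common form `F^{(j)}(P, Q, Γ, Δ)` of the state-evolution matrices `Ξ^{(j)}` and
`Θ^{(j)}`: `F^{(0)} = Γ` and, for `j ≥ 1`,
`F^{(j)} = Σ_{i=1}^{j} (PQ)^i Γ ((PQ)ᵀ)^{j−i} + Σ_{i=1}^{j−1} (PQ)^i P Δ Pᵀ ((PQ)ᵀ)^{j−i−1}`. -/
noncomputable def Fmat {m : ℕ} (P Q Γ Δ : Matrix (Fin m) (Fin m) ℝ) (j : ℕ) :
    Matrix (Fin m) (Fin m) ℝ :=
  if j = 0 then Γ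
  else (∑ i ∈ Icc 1 j, (P * Q) ^ i * Γ * ((P * Q)ᵀ) ^ (j - i)) +
    ∑ i ∈ Icc 1 (j - 1), (P * Q) ^ i * P * Δ * Pᵀ * ((P * Q)ᵀ) ^ (j - i - 1)

section Aux

variable {t : ℕ}

/-- `Z A`: the above-diagonal entries of the last column of `A` vanish. -/
def ZProp (A : Matrix (Fin (t + 1)) (Fin (t + 1)) ℝ) : Prop :=
  ∀ i : Fin t, A i.castSucc (Fin.last t) = 0

lemma ZProp_one : ZProp (1 : Matrix (Fin (t + 1)) (Fin (t + 1)) ℝ) := by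
  intro i
  rw [Matrix.one_apply_ne]
  exact (Fin.castSucc_lt_last i).ne

lemma ZProp_mul {A B : Matrix (Fin (t + 1)) (Fin (t + 1)) ℝ}
    (hA : ZProp A) (hB : ZProp B) : ZProp (A * B) := by
  intro i
  have hA' : A i.castSucc (Fin.last t) = 0 := hA i
  have hB' : ∀ k : Fin t, B k.castSucc (Fin.last t) = 0 := hB
  rw [Matrix.mul_apply, Fin.sum_univ_castSucc]
  simp [hA', hB']

lemma ZProp_pow {A : Matrix (Fin (t + 1)) (Fin (t + 1)) ℝ}
    (hA : ZProp A) : ∀ n, ZProp (A ^ n)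
  | 0 => by rw [pow_zero]; exact ZProp_one
  | n + 1 => by rw [pow_succ]; exact ZProp_mul (ZProp_pow hA n) hA

lemma subL {A B : Matrix (Fin (t + 1)) (Fin (t + 1)) ℝ} (hA : ZProp A) :
    (A * B).submatrix (Fin.castSucc : Fin t → Fin (t + 1)) Fin.castSucc =
      A.submatrix Fin.castSucc Fin.castSucc * B.submatrix Fin.castSucc Fin.castSucc := by
  ext i j
  simp only [Matrix.submatrix_apply, Matrix.mul_apply, Fin.sum_univ_castSucc, hA i, zero_mul,
    add_zero]

lemma subR {A B : Matrix (Fin (t + 1)) (Fin (t + 1)) ℝ}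
    (hB : ∀ j : Fin t, B (Fin.last t) j.castSucc = 0) :
    (A * B).submatrix (Fin.castSucc : Fin t → Fin (t + 1)) Fin.castSucc =
      A.submatrix Fin.castSucc Fin.castSucc * B.submatrix Fin.castSucc Fin.castSucc := by
  ext i j
  simp only [Matrix.submatrix_apply, Matrix.mul_apply, Fin.sum_univ_castSucc, hB j, mul_zero,
    add_zero]

lemma subPow {A : Matrix (Fin (t + 1)) (Fin (t + 1)) ℝ} (hA : ZProp A) :
    ∀ n, (A ^ n).submatrix (Fin.castSucc : Fin t → Fin (t + 1)) Fin.castSucc =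
      (A.submatrix Fin.castSucc Fin.castSucc) ^ n
  | 0 => by
      ext a b
      simp [Matrix.one_apply, Fin.castSucc_inj]
  | n + 1 => by
      rw [pow_succ, subL (ZProp_pow hA n), subPow hA n, pow_succ]

lemma subPowT {A : Matrix (Fin (t + 1)) (Fin (t + 1)) ℝ} (hA : ZProp A) (n : ℕ) :
    ((Aᵀ) ^ n).submatrix (Fin.castSucc : Fin t → Fin (t + 1)) Fin.castSucc =
      ((A.submatrix Fin.castSucc Fin.castSucc)ᵀ) ^ n := by
  rw [← Matrix.transpose_pow, ← Matrix.transpose_submatrix, subPow hA n, Matrix.transpose_pow]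

lemma submatrix_sum {ι : Type*} (s : Finset ι)
    (M : ι → Matrix (Fin (t + 1)) (Fin (t + 1)) ℝ) :
    (∑ i ∈ s, M i).submatrix (Fin.castSucc : Fin t → Fin (t + 1)) Fin.castSucc =
      ∑ i ∈ s, (M i).submatrix (Fin.castSucc : Fin t → Fin (t + 1)) Fin.castSucc := by
  ext a b
  simp [Matrix.sum_apply]

end Aux

/-- if `P, Q` are lower triangular and `PQ` is strictly lower triangular, then the
top-left `t×t` block of `F^{(j)}(P, Q, Γ, Δ)` equals `F^{(j)}` of the top-left `t×t` blocks. -/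
theorem statement9 {t : ℕ} (ht : 1 ≤ t)
    (P Q Γ Δ : Matrix (Fin (t + 1)) (Fin (t + 1)) ℝ)
    (hP : ∀ i j : Fin (t + 1), i < j → P i j = 0)
    (hQ : ∀ i j : Fin (t + 1), i < j → Q i j = 0)
    (hPQ : ∀ i j : Fin (t + 1), i ≤ j → (P * Q) i j = 0) :
    ∀ j : ℕ,
      (Fmat P Q Γ Δ j).submatrix (Fin.castSucc : Fin t → Fin (t + 1)) Fin.castSucc =
      Fmat (P.submatrix Fin.castSucc Fin.castSucc) (Q.submatrix Fin.castSucc Fin.castSucc)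
        (Γ.submatrix Fin.castSucc Fin.castSucc) (Δ.submatrix Fin.castSucc Fin.castSucc) j := by
  intro j
  have hZP : ZProp P := fun i => hP _ _ (Fin.castSucc_lt_last i)
  have hZS : ZProp (P * Q) := fun i => hPQ _ _ (Fin.le_last _)
  have hsubS : (P * Q).submatrix (Fin.castSucc : Fin t → Fin (t + 1)) Fin.castSucc =
      P.submatrix Fin.castSucc Fin.castSucc * Q.submatrix Fin.castSucc Fin.castSucc :=
    subL hZP
  unfold Fmat
  by_cases hj : j = 0
  · simp [hj]
  · simp only [hj, if_false]
    rw [Matrix.submatrix_add, Pi.add_apply, Pi.add_apply, submatrix_sum, submatrix_sum]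
    congr 1
    · refine Finset.sum_congr rfl fun i _ => ?_
      rw [subR (fun j' => by
            rw [← Matrix.transpose_pow]; exact ZProp_pow hZS (j - i) j'),
        subL (ZProp_pow hZS i), subPow hZS i, subPowT hZS (j - i), hsubS]
    · refine Finset.sum_congr rfl fun i _ => ?_
      rw [subR (fun j' => by
            rw [← Matrix.transpose_pow]; exact ZProp_pow hZS (j - i - 1) j'),
        subR (fun j' => hZP j'),
        subL (ZProp_mul (ZProp_pow hZS i) hZP),
        subL (ZProp_pow hZS i), subPow hZS i, subPowT hZS (j - i - 1), hsubS,
        Matrix.transpose_submatrix]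
end
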